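/- Fix 0 < R < 1 and 0 < μ ≤ 1−R, and let 0 < ℓ < 1 with ℓ > μ. Along any sequence of n for which μn divides (1−R)n, the average SS weight distribution of the redundant random ensemble satisfies lim_{n→∞} (1/n) log₂ S_{ℓn}^{R_{(1−R)n,n}^{(μn)}} = H(ℓ), where H is the binary entropy function. -/

import Mathlib

open Filter

/-- The binary entropy function. -/
noncomputable def binH (x : ℝ) : ℝ := -x * Real.logb 2 x - (1 - x) * Real.logb 2 (1 - x)

/-- Integer inner product of two F₂-vectors (viewed as 0/1 vectors). -/
def ip2 {n : ℕ} (h x : Fin n → ZMod 2) : ℕ :=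
  ∑ j, if h j = 1 ∧ x j = 1 then 1 else 0

/-- Hamming weight of a vector over F₂. -/
def wt2 {n : ℕ} (x : Fin n → ZMod 2) : ℕ :=
  (Finset.univ.filter fun j => x j = 1).card

/-- Average SS weight distribution, at weight `w`, of the redundant random ensemble
`R_{m,n}^{(L)}`: the underlying matrix consists of `m / L` independent uniformly random
blocks of `L` rows each, and the extended matrix consists of all nonzero F₂-linear
combinations of the rows within each block.  `x` is an SS vector of the extended matrix
iff no such combination has integer inner product 1 with `x`. -/
noncomputable def avgSSredundant (m L n w : ℕ) : ℝ :=
  (∑ H : Fin (m / L) → Fin L → Fin n → ZMod 2,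
      ((Finset.univ.filter fun x : Fin n → ZMod 2 =>
          wt2 x = w ∧ ∀ b : Fin (m / L), ∀ a : Fin L → ZMod 2, a ≠ 0 →
            ip2 (fun j => ∑ i, a i * H b i j) x ≠ 1).card : ℝ))
    / 2 ^ (m * n)

open Finset Real

lemma zmod2_cases (a : ZMod 2) : a = 0 ∨ a = 1 := by revert a; decide

lemma cardW (n w : ℕ) :
    (Finset.univ.filter fun x : Fin n → ZMod 2 => wt2 x = w).card = n.choose w := by
  have h : (Finset.univ.filter fun x : Fin n → ZMod 2 => wt2 x = w).card
      = ((Finset.univ : Finset (Fin n)).powersetCard w).card := by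
    apply Finset.card_bij (fun x _ => Finset.univ.filter fun j => x j = 1)
    · intro x hx
      simp only [Finset.mem_filter, Finset.mem_univ, true_and] at hx
      simp [Finset.mem_powersetCard, ← hx, wt2]
    · intro x hx y hy hxy
      funext j
      have hj : (x j = 1) ↔ (y j = 1) := by
        have := Finset.ext_iff.1 hxy j
        simpa using this
      rcases zmod2_cases (x j) with h1 | h1 <;> rcases zmod2_cases (y j) with h2 | h2 <;>
        simp_all
    · intro s hs
      refine ⟨fun j => if j ∈ s then 1 else 0, ?_, ?_⟩
      · rw [Finset.mem_filter]; simp only [Finset.mem_univ, true_and, wt2]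
        simp only [Finset.mem_powersetCard] at hs
        rw [← hs.2]
        congr 1
        ext j
        simp only [Finset.mem_filter, Finset.mem_univ, true_and]
        constructor
        · intro h1; by_contra hj; simp [hj] at h1
        · intro hj; simp [hj]
      · ext j
        simp only [Finset.mem_filter, Finset.mem_univ, true_and]
        constructor
        · intro h1; by_contra hj; simp [hj] at h1
        · intro hj; simp [hj]
  rw [h, Finset.card_powersetCard, Finset.card_univ, Fintype.card_fin]

lemma ip2_eq_card {n : ℕ} (h x : Fin n → ZMod 2) :
    ip2 h x = (Finset.univ.filter fun j => h j = 1 ∧ x j = 1).card := by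
  rw [ip2, Finset.card_filter]

lemma ipcount {n w : ℕ} (x : Fin n → ZMod 2) (hx : wt2 x = w) :
    (Finset.univ.filter fun h : Fin n → ZMod 2 => ip2 h x = 1).card ≤ w * 2 ^ (n - w) := by
  classical
  set S : Finset (Fin n) := Finset.univ.filter fun j => x j = 1 with hS
  set T : Finset (Fin n → ZMod 2) :=
    Fintype.piFinset (fun j => if x j = 1 then ({0} : Finset (ZMod 2)) else Finset.univ) with hT
  have hcard : (S.powersetCard 1 ×ˢ T).card = w * 2 ^ (n - w) := by
    rw [Finset.card_product, Finset.card_powersetCard]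
    have h1 : S.card = w := hx
    have h2 : T.card = 2 ^ (n - w) := by
      rw [hT, Fintype.card_piFinset]
      have : ∀ j, (if x j = 1 then ({0} : Finset (ZMod 2)) else Finset.univ).card
          = if x j = 1 then 1 else 2 := by
        intro j; split <;> simp [Finset.card_univ]
      simp only [this]
      rw [Finset.prod_ite, Finset.prod_const, Finset.prod_const, one_pow, one_mul]
      congr 1
      have := Finset.card_filter_add_card_filter_not (s := (Finset.univ : Finset (Fin n)))
        (p := fun j => x j = 1)
      have hc : (Finset.univ.filter fun j => x j = 1).card = w := hx
      simp only [Finset.card_univ, Fintype.card_fin] at this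
      omega
    rw [h1, h2, Nat.choose_one_right]
  rw [← hcard]
  apply Finset.card_le_card_of_injOn
    (fun h => (Finset.univ.filter fun j => h j = 1 ∧ x j = 1,
               fun j => if x j = 1 then 0 else h j))
  · intro h hh
    simp only [Finset.mem_coe, Finset.mem_filter, Finset.mem_univ, true_and] at hh
    rw [Finset.mem_coe, Finset.mem_product]
    constructor
    · rw [Finset.mem_powersetCard]
      refine ⟨fun j hj => ?_, ?_⟩
      · simp only [Finset.mem_filter, Finset.mem_univ, true_and] at hj
        simp [hS, hj.2]
      · rw [← ip2_eq_card]; exact hh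
    · rw [hT, Fintype.mem_piFinset]
      intro j; split <;> simp_all
  · intro h1 hh1 h2 hh2 heq
    simp only [Prod.mk.injEq] at heq
    funext j
    by_cases hj : x j = 1
    · have := Finset.ext_iff.1 heq.1 j
      simp only [Finset.mem_filter, Finset.mem_univ, true_and, hj, and_true] at this
      rcases zmod2_cases (h1 j) with e1 | e1 <;> rcases zmod2_cases (h2 j) with e2 | e2 <;>
        simp_all
    · have := congrFun heq.2 j
      simpa [hj] using this

lemma acount {L n : ℕ} (x : Fin n → ZMod 2) (a : Fin L → ZMod 2) (ha : a ≠ 0)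
    (c : ℕ) (hc : (Finset.univ.filter fun h : Fin n → ZMod 2 => ip2 h x = 1).card ≤ c) :
    (Finset.univ.filter fun H : Fin L → Fin n → ZMod 2 =>
      ip2 (fun j => ∑ i, a i * H i j) x = 1).card ≤ 2 ^ ((L - 1) * n) * c := by
  classical
  obtain ⟨i0, hi0⟩ : ∃ i0, a i0 ≠ 0 := by
    by_contra h; push_neg at h; exact ha (funext fun i => h i)
  have hai0 : a i0 = 1 := (zmod2_cases (a i0)).resolve_left hi0
  set T : Finset (Fin L → Fin n → ZMod 2) :=
    Fintype.piFinset (fun i => if i = i0 then ({0} : Finset (Fin n → ZMod 2)) else Finset.univ)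
    with hT
  have hTcard : T.card = 2 ^ ((L - 1) * n) := by
    rw [hT, Fintype.card_piFinset]
    have h0 : ∀ i, (if i = i0 then ({0} : Finset (Fin n → ZMod 2)) else Finset.univ).card
        = if i = i0 then 1 else 2 ^ n := by
      intro i; split <;> simp [Finset.card_univ, Fintype.card_fun]
    simp only [h0]
    rw [Finset.prod_ite, Finset.prod_const, Finset.prod_const, one_pow, one_mul, ← pow_mul]
    have h1 : (Finset.univ.filter fun i : Fin L => i = i0).card = 1 := by
      simp [Finset.filter_eq']
    have h2 := Finset.card_filter_add_card_filter_not
      (s := (Finset.univ : Finset (Fin L))) (p := fun i => i = i0)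
    simp only [Finset.card_univ, Fintype.card_fin] at h2
    have h3 : (Finset.univ.filter fun i : Fin L => ¬ i = i0).card = L - 1 := by omega
    rw [h3, Nat.mul_comm]
  calc (Finset.univ.filter fun H : Fin L → Fin n → ZMod 2 =>
      ip2 (fun j => ∑ i, a i * H i j) x = 1).card
      ≤ (T ×ˢ (Finset.univ.filter fun h : Fin n → ZMod 2 => ip2 h x = 1)).card := by
        apply Finset.card_le_card_of_injOn
          (fun H => (fun i => if i = i0 then 0 else H i, fun j => ∑ i, a i * H i j))
        · intro H hH
          simp only [Finset.mem_coe, Finset.mem_filter, Finset.mem_univ, true_and] at hH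
          rw [Finset.mem_coe, Finset.mem_product]
          refine ⟨?_, by simp [hH]⟩
          rw [hT, Fintype.mem_piFinset]
          intro i; split <;> simp_all
        · intro H1 hH1 H2 hH2 heq
          simp only [Prod.mk.injEq] at heq
          have key : ∀ j, H1 i0 j = H2 i0 j := by
            intro j
            have hsum := congrFun heq.2 j
            have herase : ∑ i ∈ Finset.univ.erase i0, a i * H1 i j
                = ∑ i ∈ Finset.univ.erase i0, a i * H2 i j := by
              apply Finset.sum_congr rfl
              intro i hi
              have hne : i ≠ i0 := (Finset.mem_erase.1 hi).1
              have h4 := congrFun (congrFun heq.1 i) j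
              simp only [if_neg hne] at h4
              rw [h4]
            rw [← Finset.add_sum_erase _ _ (Finset.mem_univ i0),
                ← Finset.add_sum_erase _ _ (Finset.mem_univ i0), herase] at hsum
            have h5 := add_right_cancel hsum
            rwa [hai0, one_mul, one_mul] at h5
          funext i j
          by_cases hi : i = i0
          · rw [hi]; exact key j
          · have h6 := congrFun (congrFun heq.1 i) j
            simpa [hi] using h6
      _ ≤ 2 ^ ((L - 1) * n) * c := by
        rw [Finset.card_product, hTcard]
        exact Nat.mul_le_mul_left _ hc

def NxSS (L n : ℕ) (x : Fin n → ZMod 2) : ℕ :=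
  (Finset.univ.filter fun H : Fin L → Fin n → ZMod 2 =>
    ∀ a : Fin L → ZMod 2, a ≠ 0 → ip2 (fun j => ∑ i, a i * H i j) x ≠ 1).card

lemma card_univ_fun (L n : ℕ) :
    (Finset.univ : Finset (Fin L → Fin n → ZMod 2)).card = 2 ^ (L * n) := by
  rw [Finset.card_univ, Fintype.card_fun, Fintype.card_fun, ZMod.card, Fintype.card_fin,
    Fintype.card_fin, ← pow_mul, Nat.mul_comm]

lemma NxSS_le (L n : ℕ) (x : Fin n → ZMod 2) : NxSS L n x ≤ 2 ^ (L * n) := by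
  calc NxSS L n x ≤ (Finset.univ : Finset (Fin L → Fin n → ZMod 2)).card :=
        Finset.card_filter_le _ _
    _ = 2 ^ (L * n) := card_univ_fun L n

lemma NxSS_ge {L n w : ℕ} (x : Fin n → ZMod 2) (hx : wt2 x = w) :
    2 ^ (L * n) ≤ NxSS L n x + 2 ^ L * (2 ^ ((L - 1) * n) * (w * 2 ^ (n - w))) := by
  classical
  have htot := Finset.card_filter_add_card_filter_not
    (s := (Finset.univ : Finset (Fin L → Fin n → ZMod 2)))
    (p := fun H => ∀ a : Fin L → ZMod 2, a ≠ 0 → ip2 (fun j => ∑ i, a i * H i j) x ≠ 1)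
  have hcardu := card_univ_fun L n
  have hbad : (Finset.univ.filter fun H : Fin L → Fin n → ZMod 2 =>
      ¬ ∀ a : Fin L → ZMod 2, a ≠ 0 → ip2 (fun j => ∑ i, a i * H i j) x ≠ 1).card
      ≤ 2 ^ L * (2 ^ ((L - 1) * n) * (w * 2 ^ (n - w))) := by
    have hsub : (Finset.univ.filter fun H : Fin L → Fin n → ZMod 2 =>
        ¬ ∀ a : Fin L → ZMod 2, a ≠ 0 → ip2 (fun j => ∑ i, a i * H i j) x ≠ 1)
        ⊆ (Finset.univ.filter fun a : Fin L → ZMod 2 => a ≠ 0).biUnion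
            (fun a => Finset.univ.filter fun H : Fin L → Fin n → ZMod 2 =>
              ip2 (fun j => ∑ i, a i * H i j) x = 1) := by
      intro H hH
      simp only [Finset.mem_filter, Finset.mem_univ, true_and] at hH
      push_neg at hH
      obtain ⟨a, ha, hip⟩ := hH
      exact Finset.mem_biUnion.2 ⟨a, by simp [ha], by simp [hip]⟩
    calc _ ≤ _ := Finset.card_le_card hsub
      _ ≤ ∑ a ∈ Finset.univ.filter fun a : Fin L → ZMod 2 => a ≠ 0,
            (Finset.univ.filter fun H : Fin L → Fin n → ZMod 2 =>
              ip2 (fun j => ∑ i, a i * H i j) x = 1).card := Finset.card_biUnion_le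
      _ ≤ ∑ a ∈ Finset.univ.filter fun a : Fin L → ZMod 2 => a ≠ 0,
            2 ^ ((L - 1) * n) * (w * 2 ^ (n - w)) := by
          apply Finset.sum_le_sum
          intro a ha
          simp only [Finset.mem_filter, Finset.mem_univ, true_and] at ha
          exact acount x a ha _ (ipcount x hx)
      _ ≤ 2 ^ L * (2 ^ ((L - 1) * n) * (w * 2 ^ (n - w))) := by
          rw [Finset.sum_const, smul_eq_mul]
          apply Nat.mul_le_mul_right
          calc _ ≤ (Finset.univ : Finset (Fin L → ZMod 2)).card := Finset.card_filter_le _ _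
            _ = 2 ^ L := by
                rw [Finset.card_univ, Fintype.card_fun, ZMod.card, Fintype.card_fin]
  have hN : NxSS L n x = (Finset.univ.filter fun H : Fin L → Fin n → ZMod 2 =>
    ∀ a : Fin L → ZMod 2, a ≠ 0 → ip2 (fun j => ∑ i, a i * H i j) x ≠ 1).card := rfl
  rw [← hN] at htot
  rw [← hcardu, ← htot]
  exact Nat.add_le_add_left hbad _

lemma avg_eq {m L n w : ℕ} (hm : L ∣ m) :
    avgSSredundant m L n w
      = ∑ x ∈ Finset.univ.filter fun x : Fin n → ZMod 2 => wt2 x = w,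
          ((NxSS L n x : ℝ) / 2 ^ (L * n)) ^ (m / L) := by
  classical
  set B := m / L with hB
  have hmB : m = L * B := (Nat.div_mul_cancel hm).symm.trans (Nat.mul_comm _ _)
  rw [avgSSredundant]
  have hnum : (∑ H : Fin B → Fin L → Fin n → ZMod 2,
      ((Finset.univ.filter fun x : Fin n → ZMod 2 =>
          wt2 x = w ∧ ∀ b : Fin B, ∀ a : Fin L → ZMod 2, a ≠ 0 →
            ip2 (fun j => ∑ i, a i * H b i j) x ≠ 1).card : ℝ))
      = ∑ x ∈ Finset.univ.filter fun x : Fin n → ZMod 2 => wt2 x = w,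
          (NxSS L n x : ℝ) ^ B := by
    have step1 : ∀ H : Fin B → Fin L → Fin n → ZMod 2,
        ((Finset.univ.filter fun x : Fin n → ZMod 2 =>
          wt2 x = w ∧ ∀ b : Fin B, ∀ a : Fin L → ZMod 2, a ≠ 0 →
            ip2 (fun j => ∑ i, a i * H b i j) x ≠ 1).card : ℝ)
        = ∑ x ∈ Finset.univ.filter fun x : Fin n → ZMod 2 => wt2 x = w,
            ∏ b : Fin B, (if ∀ a : Fin L → ZMod 2, a ≠ 0 →
              ip2 (fun j => ∑ i, a i * H b i j) x ≠ 1 then (1:ℝ) else 0) := by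
      intro H
      rw [Finset.card_filter]
      push_cast
      rw [Finset.sum_filter]
      apply Finset.sum_congr rfl
      intro x _
      rw [Finset.prod_boole]
      by_cases h1 : wt2 x = w <;> by_cases h2 : ∀ b : Fin B, ∀ a : Fin L → ZMod 2, a ≠ 0 →
          ip2 (fun j => ∑ i, a i * H b i j) x ≠ 1 <;> simp [h1, h2]
    simp only [step1]
    rw [Finset.sum_comm]
    apply Finset.sum_congr rfl
    intro x _
    have hps := Finset.prod_univ_sum
      (t := fun _ : Fin B => (Finset.univ : Finset (Fin L → Fin n → ZMod 2)))
      (f := fun (_b : Fin B) (G : Fin L → Fin n → ZMod 2) =>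
        if (∀ a : Fin L → ZMod 2, a ≠ 0 → ip2 (fun j => ∑ i, a i * G i j) x ≠ 1)
        then (1:ℝ) else 0)
    rw [← Fintype.piFinset_univ, ← hps]
    have hone : ∀ _b : Fin B, (∑ G ∈ (Finset.univ : Finset (Fin L → Fin n → ZMod 2)),
        if (∀ a : Fin L → ZMod 2, a ≠ 0 → ip2 (fun j => ∑ i, a i * G i j) x ≠ 1)
        then (1:ℝ) else 0) = (NxSS L n x : ℝ) := by
      intro _b
      rw [Finset.sum_boole, NxSS]
    rw [Finset.prod_congr rfl (fun b _ => hone b), Finset.prod_const, Finset.card_univ,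
      Fintype.card_fin]
  rw [hnum, Finset.sum_div]
  apply Finset.sum_congr rfl
  intro x _
  rw [div_pow, ← pow_mul]
  congr 2
  rw [hmB]; ring

section MaxTerm
variable {n w : ℕ}

private noncomputable def fterm (n w i : ℕ) : ℝ :=
  ((w:ℝ)/n) ^ i * (((n-w:ℕ):ℝ)/n) ^ (n-i) * (n.choose i)

lemma fterm_nonneg (n w i : ℕ) : 0 ≤ fterm n w i := by
  unfold fterm; positivity

lemma nat_step_up {n w i : ℕ} (hi : i < w) (hw : w ≤ n) :
    n.choose i * (n - w) ≤ n.choose (i+1) * w := by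
  have h1 : n.choose (i+1) * (i+1) = n.choose i * (n - i) := Nat.choose_succ_right_eq n i
  have h2 : (n - w) * (i+1) ≤ (n - i) * w :=
    Nat.mul_le_mul (Nat.sub_le_sub_left (le_of_lt hi) n) hi
  have h3 : (n.choose i * (n - w)) * (i+1) ≤ (n.choose (i+1) * w) * (i+1) := by
    calc (n.choose i * (n - w)) * (i+1) = n.choose i * ((n - w) * (i+1)) := by ring
      _ ≤ n.choose i * ((n - i) * w) := Nat.mul_le_mul_left _ h2
      _ = (n.choose i * (n - i)) * w := by ring
      _ = (n.choose (i+1) * (i+1)) * w := by rw [h1]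
      _ = (n.choose (i+1) * w) * (i+1) := by ring
  exact Nat.le_of_mul_le_mul_right h3 (Nat.succ_pos i)

lemma nat_step_down {n w i : ℕ} (hi : w ≤ i) (hin : i < n) :
    n.choose (i+1) * w ≤ n.choose i * (n - w) := by
  have h1 : n.choose (i+1) * (i+1) = n.choose i * (n - i) := Nat.choose_succ_right_eq n i
  have h2 : (n - i) * w ≤ (n - w) * (i+1) :=
    Nat.mul_le_mul (Nat.sub_le_sub_left hi n) (Nat.le_succ_of_le hi)
  have h3 : (n.choose (i+1) * w) * (i+1) ≤ (n.choose i * (n - w)) * (i+1) := by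
    calc (n.choose (i+1) * w) * (i+1) = (n.choose (i+1) * (i+1)) * w := by ring
      _ = (n.choose i * (n - i)) * w := by rw [h1]
      _ = n.choose i * ((n - i) * w) := by ring
      _ ≤ n.choose i * ((n - w) * (i+1)) := Nat.mul_le_mul_left _ h2
      _ = (n.choose i * (n - w)) * (i+1) := by ring
  exact Nat.le_of_mul_le_mul_right h3 (Nat.succ_pos i)

lemma fterm_step_up (hn : 0 < n) (hw : w ≤ n) {i : ℕ} (hi : i < w) :
    fterm n w i ≤ fterm n w (i+1) := by
  have hin : i < n := lt_of_lt_of_le hi hw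
  have hsplit : n - i = (n - (i+1)) + 1 := by omega
  have hq : (((n-w:ℕ):ℝ)/n) ^ (n-i) = (((n-w:ℕ):ℝ)/n) ^ (n-(i+1)) * (((n-w:ℕ):ℝ)/n) := by
    rw [hsplit, pow_succ]
  unfold fterm
  rw [hq, pow_succ]
  have key : ((n.choose i : ℝ)) * (((n-w:ℕ):ℝ)/n) ≤ ((n.choose (i+1) : ℝ)) * ((w:ℝ)/n) := by
    rw [mul_div_assoc', mul_div_assoc', div_le_div_iff_of_pos_right (by positivity)]
    exact_mod_cast nat_step_up hi hw
  calc ((w:ℝ)/n) ^ i * ((((n-w:ℕ):ℝ)/n) ^ (n-(i+1)) * (((n-w:ℕ):ℝ)/n)) * (n.choose i)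
      = (((w:ℝ)/n) ^ i * (((n-w:ℕ):ℝ)/n) ^ (n-(i+1))) * ((n.choose i : ℝ) * (((n-w:ℕ):ℝ)/n)) := by
        ring
    _ ≤ (((w:ℝ)/n) ^ i * (((n-w:ℕ):ℝ)/n) ^ (n-(i+1))) * ((n.choose (i+1) : ℝ) * ((w:ℝ)/n)) := by
        apply mul_le_mul_of_nonneg_left key (by positivity)
    _ = ((w:ℝ)/n) ^ i * ((w:ℝ)/n) * (((n-w:ℕ):ℝ)/n) ^ (n-(i+1)) * (n.choose (i+1)) := by ring

lemma fterm_step_down (hn : 0 < n) (hw : w ≤ n) {i : ℕ} (hi : w ≤ i) :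
    fterm n w (i+1) ≤ fterm n w i := by
  rcases lt_or_ge i n with hin | hin
  · have hsplit : n - i = (n - (i+1)) + 1 := by omega
    have hq : (((n-w:ℕ):ℝ)/n) ^ (n-i) = (((n-w:ℕ):ℝ)/n) ^ (n-(i+1)) * (((n-w:ℕ):ℝ)/n) := by
      rw [hsplit, pow_succ]
    unfold fterm
    rw [hq, pow_succ]
    have key : ((n.choose (i+1) : ℝ)) * ((w:ℝ)/n) ≤ ((n.choose i : ℝ)) * (((n-w:ℕ):ℝ)/n) := by
      rw [mul_div_assoc', mul_div_assoc', div_le_div_iff_of_pos_right (by positivity)]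
      exact_mod_cast nat_step_down hi hin
    calc ((w:ℝ)/n) ^ i * ((w:ℝ)/n) * (((n-w:ℕ):ℝ)/n) ^ (n-(i+1)) * (n.choose (i+1))
        = (((w:ℝ)/n) ^ i * (((n-w:ℕ):ℝ)/n) ^ (n-(i+1))) * ((n.choose (i+1) : ℝ) * ((w:ℝ)/n)) := by
          ring
      _ ≤ (((w:ℝ)/n) ^ i * (((n-w:ℕ):ℝ)/n) ^ (n-(i+1))) * ((n.choose i : ℝ) * (((n-w:ℕ):ℝ)/n)) := by
          apply mul_le_mul_of_nonneg_left key (by positivity)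
      _ = ((w:ℝ)/n) ^ i * ((((n-w:ℕ):ℝ)/n) ^ (n-(i+1)) * (((n-w:ℕ):ℝ)/n)) * (n.choose i) := by
          ring
  · have h0 : n.choose (i+1) = 0 := Nat.choose_eq_zero_of_lt (by omega)
    unfold fterm
    rw [h0]
    simp only [Nat.cast_zero, mul_zero]
    positivity

lemma fterm_le_max (hn : 0 < n) (hw : w ≤ n) (i : ℕ) : fterm n w i ≤ fterm n w w := by
  have up : ∀ k j, j + k = w → fterm n w j ≤ fterm n w w := by
    intro k
    induction k with
    | zero => intro j hj; simp only [Nat.add_zero] at hj; rw [hj]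
    | succ k ih =>
      intro j hj
      have h1 : j < w := by omega
      calc fterm n w j ≤ fterm n w (j+1) := fterm_step_up hn hw h1
        _ ≤ fterm n w w := ih (j+1) (by omega)
  have down : ∀ k, fterm n w (w + k) ≤ fterm n w w := by
    intro k
    induction k with
    | zero => rfl
    | succ k ih =>
      calc fterm n w (w + (k+1)) = fterm n w ((w + k) + 1) := by ring_nf
        _ ≤ fterm n w (w + k) := fterm_step_down hn hw (by omega)
        _ ≤ fterm n w w := ih
  rcases le_or_gt i w with h | h
  · exact up (w - i) i (by omega)
  · have := down (i - w)
    rwa [Nat.add_sub_cancel' (le_of_lt h)] at this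

lemma sum_fterm (hn : 0 < n) (hw : w ≤ n) : ∑ i ∈ range (n+1), fterm n w i = 1 := by
  have hpq : ((w:ℝ)/n) + (((n-w:ℕ):ℝ)/n) = 1 := by
    rw [← add_div]
    rw [div_eq_one_iff_eq (by positivity)]
    push_cast [hw]
    ring
  have := add_pow ((w:ℝ)/n) (((n-w:ℕ):ℝ)/n) n
  rw [hpq, one_pow] at this
  rw [this]
  apply Finset.sum_congr rfl
  intro i _
  rw [fterm]

lemma choose_upper_bound (hn : 0 < n) (hw : w ≤ n) :
    ((w:ℝ)/n) ^ w * (((n-w:ℕ):ℝ)/n) ^ (n-w) * (n.choose w) ≤ 1 := by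
  rw [← sum_fterm hn hw]
  exact Finset.single_le_sum (fun i _ => fterm_nonneg n w i) (by simp [Nat.lt_succ_iff, hw])

lemma choose_lower_bound (hn : 0 < n) (hw : w ≤ n) :
    1 ≤ (n + 1 : ℝ) * (((w:ℝ)/n) ^ w * (((n-w:ℕ):ℝ)/n) ^ (n-w) * (n.choose w)) := by
  calc (1:ℝ) = ∑ i ∈ range (n+1), fterm n w i := (sum_fterm hn hw).symm
    _ ≤ ∑ _i ∈ range (n+1), fterm n w w :=
        Finset.sum_le_sum (fun i _ => fterm_le_max hn hw i)
    _ = (n + 1 : ℝ) * fterm n w w := by rw [Finset.sum_const, Finset.card_range]; push_cast; ring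
    _ = _ := by rw [fterm]

end MaxTerm

lemma nbinH_eq {n w : ℕ} (h0 : 0 < w) (hwn : w < n) :
    (n:ℝ) * binH ((w:ℝ)/n)
      = - Real.logb 2 (((w:ℝ)/n) ^ w * (((n-w:ℕ):ℝ)/n) ^ (n-w)) := by
  have hn0 : 0 < n := by omega
  have hn : (0:ℝ) < n := by exact_mod_cast hn0
  have hp : (0:ℝ) < (w:ℝ)/n := by positivity
  have hq : (0:ℝ) < ((n-w:ℕ):ℝ)/n := by
    have : (0:ℕ) < n - w := by omega
    positivity
  have h1p : 1 - (w:ℝ)/n = ((n-w:ℕ):ℝ)/n := by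
    field_simp
    push_cast [le_of_lt hwn]
    ring
  rw [Real.logb_mul (by positivity) (by positivity), Real.logb_pow, Real.logb_pow, binH, h1p]
  have hnw : ((n - w : ℕ) : ℝ) = (n:ℝ) - w := by push_cast [le_of_lt hwn]; ring
  field_simp
  ring

lemma logb_choose_upper {n w : ℕ} (h0 : 0 < w) (hwn : w < n) :
    Real.logb 2 (n.choose w) ≤ (n:ℝ) * binH ((w:ℝ)/n) := by
  have hn0 : 0 < n := by omega
  have hP : (0:ℝ) < ((w:ℝ)/n) ^ w * (((n-w:ℕ):ℝ)/n) ^ (n-w) := by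
    have hn : (0:ℝ) < n := by exact_mod_cast hn0
    have h1 : (0:ℝ) < (w:ℝ)/n := by positivity
    have h2 : (0:ℝ) < ((n-w:ℕ):ℝ)/n := by
      have : (0:ℕ) < n - w := by omega
      positivity
    positivity
  have hchoose : (0:ℝ) < (n.choose w : ℝ) := by
    have := Nat.choose_pos (le_of_lt hwn)
    positivity
  have hub : (n.choose w : ℝ) ≤ (((w:ℝ)/n) ^ w * (((n-w:ℕ):ℝ)/n) ^ (n-w))⁻¹ := by
    rw [inv_eq_one_div, le_div_iff₀ hP, mul_comm]
    exact choose_upper_bound hn0 (le_of_lt hwn)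
  calc Real.logb 2 (n.choose w) ≤ Real.logb 2 ((((w:ℝ)/n) ^ w * (((n-w:ℕ):ℝ)/n) ^ (n-w))⁻¹) :=
        Real.logb_le_logb_of_le one_lt_two hchoose hub
    _ = - Real.logb 2 (((w:ℝ)/n) ^ w * (((n-w:ℕ):ℝ)/n) ^ (n-w)) := Real.logb_inv _ _
    _ = (n:ℝ) * binH ((w:ℝ)/n) := (nbinH_eq h0 hwn).symm

lemma logb_choose_lower {n w : ℕ} (h0 : 0 < w) (hwn : w < n) :
    (n:ℝ) * binH ((w:ℝ)/n) - Real.logb 2 (n+1) ≤ Real.logb 2 (n.choose w) := by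
  have hn0 : 0 < n := by omega
  set P : ℝ := ((w:ℝ)/n) ^ w * (((n-w:ℕ):ℝ)/n) ^ (n-w) with hPdef
  have hP : (0:ℝ) < P := by
    have hn : (0:ℝ) < n := by exact_mod_cast hn0
    have h1 : (0:ℝ) < (w:ℝ)/n := by positivity
    have h2 : (0:ℝ) < ((n-w:ℕ):ℝ)/n := by
      have : (0:ℕ) < n - w := by omega
      positivity
    rw [hPdef]; positivity
  have hchoose : (0:ℝ) < (n.choose w : ℝ) := by
    have := Nat.choose_pos (le_of_lt hwn)
    positivity
  have h := choose_lower_bound hn0 (le_of_lt hwn)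
  rw [← hPdef] at h
  have hlb : P⁻¹ / ((n:ℝ)+1) ≤ (n.choose w : ℝ) := by
    rw [div_le_iff₀ (by positivity), inv_le_iff_one_le_mul₀ hP]
    calc (1:ℝ) ≤ ((n:ℝ)+1) * (P * (n.choose w)) := h
      _ = P * ((n.choose w : ℝ) * ((n:ℝ)+1)) := by ring
      _ ≤ (n.choose w : ℝ) * ((n:ℝ)+1) * P := le_of_eq (by ring)
  have hmono := Real.logb_le_logb_of_le one_lt_two (by positivity) hlb
  rw [Real.logb_div (by positivity) (by positivity), Real.logb_inv] at hmono
  rw [nbinH_eq h0 hwn, ← hPdef]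
  linarith

lemma logb_one_sub_ge {ε : ℝ} (h0 : 0 ≤ ε) (h2 : ε ≤ 1/2) :
    -4 * ε ≤ Real.logb 2 (1 - ε) := by
  have hpos : (0:ℝ) < 1 - ε := by linarith
  have hexp : Real.exp (-(2*ε)) ≤ 1 - ε := by
    have h1 : 1 + 2*ε ≤ Real.exp (2*ε) := by
      have := Real.add_one_le_exp (2*ε); linarith
    have h2' : Real.exp (-(2*ε)) = (Real.exp (2*ε))⁻¹ := by rw [Real.exp_neg]
    rw [h2']
    rw [inv_le_comm₀ (Real.exp_pos _) hpos]
    calc (1 - ε)⁻¹ ≤ 1 + 2*ε := by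
          rw [inv_le_comm₀ hpos (by linarith), inv_eq_one_div, div_le_iff₀ (by linarith)]
          nlinarith
      _ ≤ Real.exp (2*ε) := h1
  have hlog : -(2*ε) ≤ Real.log (1 - ε) := by
    rw [← Real.le_log_iff_exp_le hpos] at hexp
    exact hexp
  rw [Real.logb, le_div_iff₀ (Real.log_pos one_lt_two)]
  have hl2 : (1/2 : ℝ) ≤ Real.log 2 := by
    have := Real.log_two_gt_d9; linarith
  nlinarith [hlog, hl2, h0]

lemma sandwich {m L n w : ℕ} (hL : 1 ≤ L) (hw : 1 ≤ w) (hwn : w < n) (hmn : m ≤ n)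
    (hdvd : L ∣ m) (hε : (2:ℝ)^L * w / 2^w ≤ 1/2) :
    binH ((w:ℝ)/n) - Real.logb 2 (n+1) / n - 4 * ((2:ℝ)^L * w / 2^w)
      ≤ (1/(n:ℝ)) * Real.logb 2 (avgSSredundant m L n w)
    ∧ (1/(n:ℝ)) * Real.logb 2 (avgSSredundant m L n w) ≤ binH ((w:ℝ)/n) := by
  have hn0 : 0 < n := by omega
  have hnR : (0:ℝ) < n := by exact_mod_cast hn0
  set ε : ℝ := (2:ℝ)^L * w / 2^w with hεdef
  have hε0 : 0 ≤ ε := by rw [hεdef]; positivity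
  set B : ℕ := m / L with hBdef
  have hBn : B ≤ n := le_trans (Nat.div_le_self m L) hmn
  have hCpos : (0:ℝ) < (n.choose w : ℝ) := by
    exact_mod_cast Nat.choose_pos (le_of_lt hwn)
  have hC1 : (1:ℝ) ≤ (n.choose w : ℝ) := by
    exact_mod_cast Nat.choose_pos (le_of_lt hwn)
  have hpow : ((L-1)*n) + (n-w) + w = L*n := by
    have : 1 ≤ L := hL
    cases' Nat.exists_eq_add_of_le hL with c hc
    subst hc
    simp only [Nat.add_sub_cancel_left]
    have hwn' : w ≤ n := le_of_lt hwn
    zify [hwn']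
    ring
  have hpowR : (2:ℝ)^((L-1)*n) * (2:ℝ)^(n-w) * (2:ℝ)^w = (2:ℝ)^(L*n) := by
    rw [← pow_add, ← pow_add, hpow]
  have heq : (2:ℝ)^(L*n) * ε = 2^L * ((2:ℝ)^((L-1)*n) * ((w:ℝ) * 2^(n-w))) := by
    rw [hεdef, ← hpowR]
    field_simp
  -- per-x ratio bounds
  have hratio : ∀ x : Fin n → ZMod 2, wt2 x = w →
      1 - ε ≤ (NxSS L n x : ℝ) / 2^(L*n) ∧ (NxSS L n x : ℝ) / 2^(L*n) ≤ 1 := by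
    intro x hx
    constructor
    · rw [le_div_iff₀ (by positivity)]
      have hge : (2:ℝ)^(L*n) ≤ (NxSS L n x : ℝ)
          + 2^L * ((2:ℝ)^((L-1)*n) * ((w:ℝ) * 2^(n-w))) := by
        have := NxSS_ge (L := L) x hx
        exact_mod_cast this
      nlinarith [heq]
    · rw [div_le_one (by positivity)]
      exact_mod_cast NxSS_le L n x
  have havg := avg_eq (m := m) (L := L) (n := n) (w := w) hdvd
  -- bounds on avg
  have hupper : avgSSredundant m L n w ≤ (n.choose w : ℝ) := by
    rw [havg, ← hBdef]
    calc ∑ x ∈ Finset.univ.filter fun x : Fin n → ZMod 2 => wt2 x = w,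
          ((NxSS L n x : ℝ) / 2 ^ (L * n)) ^ B
        ≤ ∑ _x ∈ Finset.univ.filter fun x : Fin n → ZMod 2 => wt2 x = w, (1:ℝ) := by
          apply Finset.sum_le_sum
          intro x hxmem
          have hx : wt2 x = w := by simpa using hxmem
          exact pow_le_one₀ (by positivity) (hratio x hx).2
      _ = (n.choose w : ℝ) := by rw [Finset.sum_const, cardW]; simp
  have hlower : (n.choose w : ℝ) * (1 - ε)^B ≤ avgSSredundant m L n w := by
    rw [havg, ← hBdef]
    calc (n.choose w : ℝ) * (1 - ε)^B
        = ∑ _x ∈ Finset.univ.filter fun x : Fin n → ZMod 2 => wt2 x = w, (1 - ε)^B := by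
          rw [Finset.sum_const, cardW]; simp [mul_comm]
      _ ≤ ∑ x ∈ Finset.univ.filter fun x : Fin n → ZMod 2 => wt2 x = w,
            ((NxSS L n x : ℝ) / 2 ^ (L * n)) ^ B := by
          apply Finset.sum_le_sum
          intro x hxmem
          have hx : wt2 x = w := by simpa using hxmem
          exact pow_le_pow_left₀ (by linarith) (hratio x hx).1 B
  have h1ε : (0:ℝ) < 1 - ε := by linarith
  have havgpos : 0 < avgSSredundant m L n w :=
    lt_of_lt_of_le (by positivity) hlower
  constructor
  · -- lower bound
    have hlog1 : Real.logb 2 ((n.choose w : ℝ) * (1 - ε)^B)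
        ≤ Real.logb 2 (avgSSredundant m L n w) :=
      Real.logb_le_logb_of_le one_lt_two (by positivity) hlower
    rw [Real.logb_mul (by positivity) (by positivity), Real.logb_pow] at hlog1
    have hlogC := logb_choose_lower (n := n) (w := w) hw hwn
    have hlogε := logb_one_sub_ge hε0 hε
    have hB4 : (-4) * ε * n ≤ (B:ℝ) * Real.logb 2 (1 - ε) := by
      have hlognp : Real.logb 2 (1 - ε) ≤ 0 :=
        Real.logb_nonpos one_lt_two (by linarith) (by linarith)
      have hBR : (B:ℝ) ≤ n := by exact_mod_cast hBn
      nlinarith [hlogε, hlognp, hBR]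
    have key : (n:ℝ) * binH ((w:ℝ)/n) - Real.logb 2 (n+1) - 4 * ε * n
        ≤ Real.logb 2 (avgSSredundant m L n w) := by linarith
    calc binH ((w:ℝ)/n) - Real.logb 2 (n+1) / n - 4 * ε
        = (1/(n:ℝ)) * ((n:ℝ) * binH ((w:ℝ)/n) - Real.logb 2 (n+1) - 4 * ε * n) := by
          field_simp
      _ ≤ (1/(n:ℝ)) * Real.logb 2 (avgSSredundant m L n w) :=
          mul_le_mul_of_nonneg_left key (by positivity)
  · -- upper bound
    have hlog1 : Real.logb 2 (avgSSredundant m L n w) ≤ Real.logb 2 (n.choose w : ℝ) :=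
      Real.logb_le_logb_of_le one_lt_two havgpos hupper
    have hlogC := logb_choose_upper (n := n) (w := w) hw hwn
    calc (1/(n:ℝ)) * Real.logb 2 (avgSSredundant m L n w)
        ≤ (1/(n:ℝ)) * ((n:ℝ) * binH ((w:ℝ)/n)) := by
          apply mul_le_mul_of_nonneg_left _ (by positivity)
          linarith
      _ = binH ((w:ℝ)/n) := by field_simp

lemma tendsto_logb_div : Tendsto (fun n : ℕ => Real.logb 2 (n+1) / n) atTop (nhds 0) := by
  have h1 : Tendsto (fun x : ℝ => Real.log x / x) atTop (nhds 0) := by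
    simpa using Real.isLittleO_log_id_atTop.tendsto_div_nhds_zero
  have hcast : Tendsto (fun n : ℕ => ((n:ℝ)+1)) atTop atTop :=
    tendsto_atTop_add_const_right atTop 1 tendsto_natCast_atTop_atTop
  have h2 : Tendsto (fun n : ℕ => Real.log ((n:ℝ)+1) / ((n:ℝ)+1)) atTop (nhds 0) :=
    h1.comp hcast
  have h3 : Tendsto (fun n : ℕ => ((n:ℝ)+1)/n) atTop (nhds 1) := by
    have h4 : Tendsto (fun n : ℕ => 1 + 1/(n:ℝ)) atTop (nhds 1) := by
      have := tendsto_one_div_atTop_nhds_zero_nat (𝕜 := ℝ)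
      simpa using tendsto_const_nhds.add this
    apply h4.congr'
    filter_upwards [eventually_ge_atTop 1] with n hn
    have : (n:ℝ) ≠ 0 := by positivity
    field_simp
  have h5 : Tendsto (fun n : ℕ => Real.log ((n:ℝ)+1) / n) atTop (nhds 0) := by
    have := h2.mul h3
    rw [zero_mul] at this
    apply this.congr'
    filter_upwards [eventually_ge_atTop 1] with n hn
    have hn0 : (n:ℝ) ≠ 0 := by positivity
    field_simp
  have h6 := h5.mul_const (1 / Real.log 2)
  rw [zero_mul] at h6
  apply h6.congr
  intro n
  rw [Real.logb]
  field_simp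

lemma tendsto_binH_floor {l : ℝ} (hl0 : 0 < l) (hl1 : l < 1) :
    Tendsto (fun n : ℕ => binH ((⌊l*n⌋₊:ℝ)/n)) atTop (nhds (binH l)) := by
  have hfrac : Tendsto (fun n : ℕ => (⌊l*n⌋₊:ℝ)/n) atTop (nhds l) := by
    apply tendsto_of_tendsto_of_tendsto_of_le_of_le'
      (g := fun n : ℕ => l - 1/(n:ℝ)) (h := fun _ : ℕ => l)
    · have := tendsto_one_div_atTop_nhds_zero_nat (𝕜 := ℝ)
      simpa using tendsto_const_nhds.sub this
    · exact tendsto_const_nhds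
    · filter_upwards [eventually_ge_atTop 1] with n hn
      have hn0 : (0:ℝ) < n := by exact_mod_cast hn
      rw [sub_le_iff_le_add, ← add_div, le_div_iff₀ hn0]
      have := Nat.lt_floor_add_one (l * n)
      linarith
    · filter_upwards [eventually_ge_atTop 1] with n hn
      have hn0 : (0:ℝ) < n := by exact_mod_cast hn
      rw [div_le_iff₀ hn0, mul_comm]
      exact Nat.floor_le (by positivity)
  have hcont : ContinuousAt binH l := by
    unfold binH
    apply ContinuousAt.sub
    · exact (continuousAt_id.neg).mul (Real.continuousAt_logb (ne_of_gt hl0))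
    · exact (continuousAt_const.sub continuousAt_id).mul
        ((Real.continuousAt_logb (by linarith)).comp (continuousAt_const.sub continuousAt_id))
  exact (hcont.tendsto).comp hfrac

lemma eps_le {μ l : ℝ} (hμ0 : 0 < μ) (hl1 : l < 1) (n : ℕ) (hn : 0 < n) :
    (2:ℝ)^(⌊μ*n⌋₊) * (⌊l*n⌋₊:ℝ) / 2^(⌊l*n⌋₊) ≤ 2 * n * ((2:ℝ) ^ (μ-l) : ℝ)^n := by
  have hnR : (0:ℝ) < n := by exact_mod_cast hn
  have h2L : (2:ℝ)^(⌊μ*n⌋₊) ≤ (2:ℝ) ^ (μ*n : ℝ) := by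
    rw [← Real.rpow_natCast 2 ⌊μ*n⌋₊]
    exact Real.rpow_le_rpow_of_exponent_le one_le_two (Nat.floor_le (by positivity))
  have hwn : (⌊l*n⌋₊:ℝ) ≤ n := by
    rcases le_or_gt l 0 with h | h
    · have : ⌊l*n⌋₊ = 0 := by
        apply Nat.floor_eq_zero.2
        calc l * n ≤ 0 := mul_nonpos_of_nonpos_of_nonneg h (le_of_lt hnR)
          _ < 1 := one_pos
      rw [this]; exact_mod_cast Nat.zero_le n
    · have := Nat.floor_le (a := l*n) (by positivity)
      nlinarith
  have h2w : (2:ℝ) ^ (l*n - 1 : ℝ) ≤ (2:ℝ)^(⌊l*n⌋₊) := by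
    rw [← Real.rpow_natCast 2 ⌊l*n⌋₊]
    apply Real.rpow_le_rpow_of_exponent_le one_le_two
    have := Nat.lt_floor_add_one (l * n)
    rcases le_or_gt l 0 with h | h
    · have hneg : l * n ≤ 0 := mul_nonpos_of_nonpos_of_nonneg h (le_of_lt hnR)
      have : (0:ℝ) ≤ (⌊l*n⌋₊:ℝ) := by positivity
      linarith
    · linarith [Nat.lt_floor_add_one (l * n)]
  have hrw : (2:ℝ) ^ (μ*n : ℝ) * (n:ℝ) / (2:ℝ) ^ (l*n - 1 : ℝ) = 2 * n * ((2:ℝ) ^ (μ-l) : ℝ)^n := by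
    have e1 : (2:ℝ)^(μ*(n:ℝ)) / (2:ℝ)^(l*(n:ℝ)-1) = (2:ℝ)^((μ-l)*(n:ℝ) + 1) := by
      rw [← Real.rpow_sub two_pos]; congr 1; ring
    have e2 : (2:ℝ)^((μ-l)*(n:ℝ)+1) = 2 * (2:ℝ)^((μ-l)*(n:ℝ)) := by
      rw [Real.rpow_add two_pos, Real.rpow_one]; ring
    have e3 : ((2:ℝ) ^ (μ-l) : ℝ)^(n:ℕ) = (2:ℝ)^((μ-l)*(n:ℝ)) := by
      rw [← Real.rpow_natCast ((2:ℝ) ^ (μ-l) : ℝ) n, ← Real.rpow_mul (by norm_num)]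
    calc (2:ℝ) ^ (μ*(n:ℝ)) * (n:ℝ) / (2:ℝ) ^ (l*(n:ℝ) - 1)
        = ((2:ℝ)^(μ*(n:ℝ)) / (2:ℝ)^(l*(n:ℝ)-1)) * n := by ring
      _ = 2 * (2:ℝ)^((μ-l)*(n:ℝ)) * n := by rw [e1, e2]
      _ = 2 * n * ((2:ℝ) ^ (μ-l) : ℝ)^(n:ℕ) := by rw [e3]; ring
  rw [← hrw]
  apply div_le_div₀ (by positivity) _ (by positivity) h2w
  exact mul_le_mul h2L hwn (by positivity) (by positivity)

theorem stmt19 (R μ ℓ : ℝ) (hR0 : 0 < R) (hR1 : R < 1) (hμ0 : 0 < μ) (hμ : μ ≤ 1 - R)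
    (hl0 : 0 < ℓ) (hl1 : ℓ < 1) (hlμ : μ < ℓ)
    (ν : ℕ → ℕ) (hν : Tendsto ν atTop atTop)
    (hdvd : ∀ k, ⌊μ * ν k⌋₊ ∣ ⌊(1 - R) * ν k⌋₊) :
    Tendsto (fun k =>
        (1 / (ν k : ℝ)) * Real.logb 2
          (avgSSredundant ⌊(1 - R) * ν k⌋₊ ⌊μ * ν k⌋₊ (ν k) ⌊ℓ * ν k⌋₊))
      atTop (nhds (binH ℓ)) := by
  set r : ℝ := (2:ℝ) ^ (μ - ℓ) with hrdef
  have hr0 : 0 ≤ r := le_of_lt (Real.rpow_pos_of_pos two_pos _)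
  have hr1 : r < 1 := Real.rpow_lt_one_of_one_lt_of_neg one_lt_two (by linarith)
  have hεbar : Tendsto (fun n : ℕ => 2 * (n:ℝ) * r^n) atTop (nhds 0) := by
    have h := (tendsto_self_mul_const_pow_of_lt_one hr0 hr1).const_mul (2:ℝ)
    rw [mul_zero] at h
    apply h.congr
    intro n; ring
  have hg : Tendsto (fun n : ℕ =>
      binH ((⌊ℓ*n⌋₊:ℝ)/n) - Real.logb 2 (n+1)/n - 4*(2*(n:ℝ)*r^n)) atTop (nhds (binH ℓ)) := by
    have h := ((tendsto_binH_floor hl0 hl1).sub tendsto_logb_div).sub (hεbar.const_mul 4)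
    rw [sub_zero, mul_zero, sub_zero] at h
    exact h
  have hh := tendsto_binH_floor hl0 hl1
  -- eventual sandwich
  have hev : ∀ᶠ n : ℕ in atTop, (⌊μ*(n:ℝ)⌋₊ ∣ ⌊(1-R)*(n:ℝ)⌋₊) →
      (binH ((⌊ℓ*(n:ℝ)⌋₊:ℝ)/n) - Real.logb 2 (n+1)/n - 4*(2*(n:ℝ)*r^n)
        ≤ (1/(n:ℝ)) * Real.logb 2 (avgSSredundant ⌊(1-R)*(n:ℝ)⌋₊ ⌊μ*(n:ℝ)⌋₊ n ⌊ℓ*(n:ℝ)⌋₊)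
      ∧ (1/(n:ℝ)) * Real.logb 2 (avgSSredundant ⌊(1-R)*(n:ℝ)⌋₊ ⌊μ*(n:ℝ)⌋₊ n ⌊ℓ*(n:ℝ)⌋₊)
          ≤ binH ((⌊ℓ*(n:ℝ)⌋₊:ℝ)/n)) := by
    have hμatTop : Tendsto (fun n : ℕ => μ*(n:ℝ)) atTop atTop :=
      Tendsto.const_mul_atTop hμ0 tendsto_natCast_atTop_atTop
    have hℓatTop : Tendsto (fun n : ℕ => ℓ*(n:ℝ)) atTop atTop :=
      Tendsto.const_mul_atTop hl0 tendsto_natCast_atTop_atTop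
    have e1 : ∀ᶠ n : ℕ in atTop, 1 ≤ ⌊μ*(n:ℝ)⌋₊ := by
      filter_upwards [hμatTop.eventually_ge_atTop 1] with n hn
      exact Nat.le_floor (by exact_mod_cast hn)
    have e2 : ∀ᶠ n : ℕ in atTop, 1 ≤ ⌊ℓ*(n:ℝ)⌋₊ := by
      filter_upwards [hℓatTop.eventually_ge_atTop 1] with n hn
      exact Nat.le_floor (by exact_mod_cast hn)
    have e5 : ∀ᶠ n : ℕ in atTop, 2*(n:ℝ)*r^n ≤ 1/2 := by
      exact hεbar.eventually_le_const (show (0:ℝ) < 1/2 by norm_num)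
    filter_upwards [e1, e2, e5, eventually_ge_atTop 1] with n h1 h2 h5 hn1 hd
    have hn0 : 0 < n := hn1
    have hnR : (0:ℝ) < n := by exact_mod_cast hn0
    have hwn : ⌊ℓ*(n:ℝ)⌋₊ < n := by
      rw [Nat.floor_lt (by positivity)]
      calc ℓ * n < 1 * n := by apply mul_lt_mul_of_pos_right hl1 hnR
        _ = n := one_mul _
    have hmn : ⌊(1-R)*(n:ℝ)⌋₊ ≤ n := by
      calc ⌊(1-R)*(n:ℝ)⌋₊ ≤ ⌊(n:ℝ)⌋₊ := Nat.floor_le_floor (by nlinarith)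
        _ = n := Nat.floor_natCast n
    have hεle := eps_le (l := ℓ) hμ0 hl1 n hn0
    have hε : (2:ℝ)^(⌊μ*(n:ℝ)⌋₊) * (⌊ℓ*(n:ℝ)⌋₊:ℝ) / 2^(⌊ℓ*(n:ℝ)⌋₊) ≤ 1/2 :=
      le_trans hεle h5
    obtain ⟨hlow, hup⟩ := sandwich h1 h2 hwn hmn hd hε
    exact ⟨by linarith, hup⟩
  apply tendsto_of_tendsto_of_tendsto_of_le_of_le' (hg.comp hν) (hh.comp hν)
  · filter_upwards [hν.eventually hev] with k hk
    exact (hk (hdvd k)).1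
  · filter_upwards [hν.eventually hev] with k hk
    exact (hk (hdvd k)).2
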